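/- Let q>2 and let C be a λ-fold 1-packing in H(n,q) with q, n, and λ all even. Then the distance distribution of C satisfies n(q-1)A_0 + 2(q-1)A_1 + 2A_2 ≤ (n+1)(q-1)λ − q. -/

import Mathlib

open Finset

section geom
variable {n q : ℕ}

lemma agree_off {x v : Fin n → Fin q} (i : Fin n) (h : ∀ j, j ≠ i → x j = v j) :
    hammingDist x v ≤ 1 := by
  unfold hammingDist
  calc ({j | x j ≠ v j} : Finset (Fin n)).card ≤ ({i} : Finset (Fin n)).card := by
        apply card_le_card
        intro j hj
        simp only [mem_filter, mem_univ, true_and] at hj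
        simp only [mem_singleton]
        by_contra hji
        exact hj (h j hji)
    _ = 1 := card_singleton i

lemma forall_eq_of_dist_le_one {x v : Fin n → Fin q} (h : hammingDist x v ≤ 1)
    {j : Fin n} (hj : x j ≠ v j) : ∀ k, k ≠ j → x k = v k := by
  intro k hk
  by_contra hxk
  have : ({j, k} : Finset (Fin n)) ⊆ Finset.univ.filter (fun i => x i ≠ v i) := by
    intro a ha
    simp only [mem_insert, mem_singleton] at ha
    simp only [mem_filter, mem_univ, true_and]
    rcases ha with rfl | rfl <;> assumption
  have h2 := card_le_card this
  rw [card_insert_of_notMem (by simpa using fun h => hk h.symm), card_singleton] at h2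
  unfold hammingDist at h
  omega

lemma dist_update {x : Fin n → Fin q} {i : Fin n} {a : Fin q} (ha : a ≠ x i) :
    hammingDist x (Function.update x i a) = 1 := by
  unfold hammingDist
  rw [card_eq_one]
  refine ⟨i, ?_⟩
  ext j
  simp only [mem_filter, mem_univ, true_and, mem_singleton, Function.update_apply]
  constructor
  · intro hj; by_contra hji; simp [hji] at hj
  · intro hj; subst hj; simp [Ne.symm ha]

lemma dist_one_iff {x v : Fin n → Fin q} :
    hammingDist x v = 1 ↔ ∃ i a, a ≠ x i ∧ v = Function.update x i a := by
  constructor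
  · intro h
    have h1 : 0 < hammingDist x v := by omega
    rw [hammingDist_pos] at h1
    have : ∃ j, x j ≠ v j := by
      by_contra hc
      push_neg at hc
      exact h1 (funext hc)
    obtain ⟨j, hj⟩ := this
    refine ⟨j, v j, fun h' => hj h'.symm, ?_⟩
    funext k
    rcases eq_or_ne k j with rfl | hk
    · simp
    · rw [Function.update_apply, if_neg hk]
      exact (forall_eq_of_dist_le_one h.le hj k hk).symm
  · rintro ⟨i, a, ha, rfl⟩
    exact dist_update ha

end geom

section cards
variable {n q : ℕ}

lemma two_le_dist {x v : Fin n → Fin q} {j k : Fin n} (hjk : j ≠ k)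
    (hj : x j ≠ v j) (hk : x k ≠ v k) : 2 ≤ hammingDist x v := by
  unfold hammingDist
  have : ({j, k} : Finset (Fin n)) ⊆ Finset.univ.filter (fun i => x i ≠ v i) := by
    intro a ha
    simp only [mem_insert, mem_singleton] at ha
    simp only [mem_filter, mem_univ, true_and]
    rcases ha with rfl | rfl <;> assumption
  have h2 := card_le_card this
  rwa [card_insert_of_notMem (by simpa using hjk), card_singleton] at h2

lemma sphere_card (x : Fin n → Fin q) :
    (univ.filter fun v => hammingDist x v = 1).card = n * (q - 1) := by
  have himg : (univ.filter fun v => hammingDist x v = 1) =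
      univ.biUnion (fun i : Fin n =>
        (univ.filter (fun a : Fin q => a ≠ x i)).image (Function.update x i)) := by
    ext v
    simp only [mem_filter, mem_univ, true_and, mem_biUnion, mem_image]
    rw [dist_one_iff]
    constructor
    · rintro ⟨i, a, ha, rfl⟩; exact ⟨i, a, by simpa using ha, rfl⟩
    · rintro ⟨i, a, ha, rfl⟩; exact ⟨i, a, by simpa using ha, rfl⟩
  rw [himg, card_biUnion]
  · have : ∀ i : Fin n, ((univ.filter (fun a : Fin q => a ≠ x i)).image
        (Function.update x i)).card = q - 1 := by
      intro i
      rw [card_image_of_injOn, filter_ne', card_erase_of_mem (mem_univ _), card_univ,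
        Fintype.card_fin]
      intro a _ b _ hab
      have := congrFun hab i
      simpa using this
    simp only [this, sum_const, card_univ, Fintype.card_fin, smul_eq_mul]
  · intro i _ j _ hij
    simp only [disjoint_left, mem_image, mem_filter, mem_univ, true_and]
    rintro v ⟨a, ha, rfl⟩ ⟨b, hb, heq⟩
    have := congrFun heq i
    rw [Function.update_apply, if_neg hij] at this
    simp at this
    exact ha this.symm

lemma ball_card (x : Fin n → Fin q) :
    (univ.filter fun v => hammingDist x v ≤ 1).card = 1 + n * (q - 1) := by
  have : (univ.filter fun v => hammingDist x v ≤ 1) =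
      (univ.filter fun v => hammingDist x v = 0) ∪ (univ.filter fun v => hammingDist x v = 1) := by
    ext v
    simp only [mem_filter, mem_univ, true_and, mem_union]
    omega
  rw [this, card_union_of_disjoint, sphere_card]
  · congr 1
    rw [card_eq_one]
    exact ⟨x, by ext v; simp [hammingDist_eq_zero, eq_comm]⟩
  · simp only [disjoint_left, mem_filter, mem_univ, true_and]
    omega

end cards

section inter
variable {n q : ℕ}

lemma inter_card_one {x y : Fin n → Fin q} (h : hammingDist x y = 1) :
    (univ.filter fun v => hammingDist x v ≤ 1 ∧ hammingDist y v ≤ 1).card = q := by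
  obtain ⟨i, b, hb, rfl⟩ := dist_one_iff.mp h
  have : (univ.filter fun v => hammingDist x v ≤ 1 ∧
      hammingDist (Function.update x i b) v ≤ 1) =
      univ.image (fun a => Function.update x i a) := by
    ext v
    simp only [mem_filter, mem_univ, true_and, mem_image]
    constructor
    · rintro ⟨h1, h2⟩
      refine ⟨v i, ?_⟩
      funext k
      rw [Function.update_apply]
      split_ifs with hk
      · subst hk; rfl
      · -- show x k = v k for k ≠ i
        by_contra hxk
        have hall := forall_eq_of_dist_le_one h1 (fun e => hxk e)
        have hik : i ≠ k := fun e => hk e.symm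
        have hvi : x i = v i := hall i hik
        have d1 : Function.update x i b i ≠ v i := by
          rw [Function.update_self, ← hvi]; exact hb
        have d2 : Function.update x i b k ≠ v k := by
          rw [Function.update_apply, if_neg hk]; exact hxk
        have := two_le_dist hik d1 d2
        omega
    · rintro ⟨a, rfl⟩
      constructor
      · apply agree_off i; intro j hj; rw [Function.update_apply, if_neg hj]
      · apply agree_off i; intro j hj; simp [Function.update_apply, if_neg hj]
  rw [this, card_image_of_injOn, card_univ, Fintype.card_fin]
  intro a _ c _ hac
  have := congrFun hac i
  simpa using this
end inter

section inter2
variable {n q : ℕ}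

lemma inter_card_two {x y : Fin n → Fin q} (h : hammingDist x y = 2) :
    (univ.filter fun v => hammingDist x v ≤ 1 ∧ hammingDist y v ≤ 1).card = 2 := by
  have h2 : (Finset.univ.filter fun i => x i ≠ y i).card = 2 := h
  obtain ⟨i, j, hij, hset⟩ := card_eq_two.mp h2
  have hmem : ∀ k, x k ≠ y k ↔ (k = i ∨ k = j) := by
    intro k
    constructor
    · intro hk
      have : k ∈ (Finset.univ.filter fun i => x i ≠ y i) := by simp [hk]
      rw [hset] at this; simpa using this
    · intro hk
      have : k ∈ ({i, j} : Finset (Fin n)) := by simpa using hk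
      rw [← hset] at this; simpa using this
  have hi : x i ≠ y i := (hmem i).mpr (Or.inl rfl)
  have hj : x j ≠ y j := (hmem j).mpr (Or.inr rfl)
  have hset2 : (univ.filter fun v => hammingDist x v ≤ 1 ∧ hammingDist y v ≤ 1) =
      {Function.update x i (y i), Function.update x j (y j)} := by
    ext v
    simp only [mem_filter, mem_univ, true_and, mem_insert, mem_singleton]
    constructor
    · rintro ⟨h1, hy1⟩
      rcases eq_or_ne (v i) (x i) with hvi | hvi
      · -- v agrees with x at i, so v i ≠ y i, v must be update x j (y j)
        right
        have hyvi : y i ≠ v i := by rw [hvi]; exact fun e => hi e.symm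
        have hally := forall_eq_of_dist_le_one hy1 hyvi
        have hvj : v j = y j := (hally j (Ne.symm hij)).symm
        have hxvj : x j ≠ v j := by rw [hvj]; exact hj
        have hallx := forall_eq_of_dist_le_one h1 hxvj
        funext k
        rw [Function.update_apply]
        split_ifs with hk
        · subst hk; exact hvj
        · exact (hallx k hk).symm
      · -- v differs from x at i
        left
        have hallx := forall_eq_of_dist_le_one h1 (fun e => hvi e.symm)
        have hvj : v j = x j := (hallx j (Ne.symm hij)).symm
        have hyvj : y j ≠ v j := by rw [hvj]; exact fun e => hj e.symm
        have hally := forall_eq_of_dist_le_one hy1 hyvj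
        funext k
        rw [Function.update_apply]
        split_ifs with hk
        · rw [hk]; exact (hally i hij).symm
        · exact (hallx k hk).symm
    · intro hv
      have key : ∀ (a b : Fin n), a ≠ b → x a ≠ y a → x b ≠ y b →
          (∀ k, x k ≠ y k → (k = a ∨ k = b)) →
          hammingDist x (Function.update x a (y a)) ≤ 1 ∧
          hammingDist y (Function.update x a (y a)) ≤ 1 := by
        intro a b hab ha hb hcover
        constructor
        · apply agree_off a; intro k hk; rw [Function.update_apply, if_neg hk]
        · apply agree_off b; intro k hk
          rw [Function.update_apply]
          split_ifs with hka
          · subst hka; rfl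
          · by_contra hc
            rcases hcover k (fun e => hc e.symm) with rfl | rfl
            · exact hka rfl
            · exact hk rfl
      rcases hv with rfl | rfl
      · exact key i j hij hi hj (fun k hk => (hmem k).mp hk)
      · have := key j i (Ne.symm hij) hj hi (fun k hk => ((hmem k).mp hk).symm)
        exact this
  rw [hset2]
  rw [card_insert_of_notMem, card_singleton]
  simp only [mem_singleton]
  intro e
  have := congrFun e i
  rw [Function.update_self, Function.update_apply, if_neg hij] at this
  exact hi this.symm

lemma inter_card_big {x y : Fin n → Fin q} (h : 3 ≤ hammingDist x y) :
    (univ.filter fun v => hammingDist x v ≤ 1 ∧ hammingDist y v ≤ 1).card = 0 := by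
  rw [card_eq_zero, filter_eq_empty_iff]
  rintro v - ⟨h1, h2⟩
  have := hammingDist_triangle x v y
  rw [hammingDist_comm v y] at this
  omega

end inter2

section sums
variable {n q : ℕ}

/-- ball intersection cardinality as a function of distance -/
def gI (n q : ℕ) (d : ℕ) : ℕ :=
  if d = 0 then 1 + n * (q - 1) else if d = 1 then q else if d = 2 then 2 else 0

lemma inter_card_eq (x y : Fin n → Fin q) :
    (univ.filter fun v => hammingDist x v ≤ 1 ∧ hammingDist y v ≤ 1).card
      = gI n q (hammingDist x y) := by
  unfold gI
  rcases h : hammingDist x y with _ | _ | _ | d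
  · have hxy : x = y := hammingDist_eq_zero.mp h
    subst hxy
    simp only [and_self, if_pos rfl]
    exact ball_card x
  · rw [if_neg (by omega), if_pos rfl]; exact inter_card_one h
  · rw [if_neg (by omega), if_neg (by omega), if_pos rfl]; exact inter_card_two h
  · rw [if_neg (by omega), if_neg (by omega), if_neg (by omega)]
    exact inter_card_big (by omega)

/-- sphere ∩ ball intersection cardinality -/
def hI (n q : ℕ) (d : ℕ) : ℕ :=
  if d = 0 then n * (q - 1) else if d = 1 then q - 1 else if d = 2 then 2 else 0

lemma sphere_inter_card_eq (hq : 2 < q) (x y : Fin n → Fin q) :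
    (univ.filter fun v => hammingDist x v = 1 ∧ hammingDist y v ≤ 1).card
      = hI n q (hammingDist x y) := by
  have hsplit : (univ.filter fun v => hammingDist x v ≤ 1 ∧ hammingDist y v ≤ 1)
      = (univ.filter fun v => hammingDist x v = 0 ∧ hammingDist y v ≤ 1)
        ∪ (univ.filter fun v => hammingDist x v = 1 ∧ hammingDist y v ≤ 1) := by
    ext v; simp only [mem_filter, mem_univ, true_and, mem_union]; omega
  have hdisj : Disjoint (univ.filter fun v => hammingDist x v = 0 ∧ hammingDist y v ≤ 1)
      (univ.filter fun v => hammingDist x v = 1 ∧ hammingDist y v ≤ 1) := by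
    simp only [disjoint_left, mem_filter, mem_univ, true_and]; omega
  have h0 : (univ.filter fun v => hammingDist x v = 0 ∧ hammingDist y v ≤ 1).card
      = if hammingDist x y ≤ 1 then 1 else 0 := by
    split_ifs with hxy
    · rw [card_eq_one]
      refine ⟨x, ?_⟩
      ext v
      simp only [mem_filter, mem_univ, true_and, mem_singleton, hammingDist_eq_zero]
      constructor
      · rintro ⟨h1, -⟩; exact h1.symm
      · rintro rfl; exact ⟨rfl, by rwa [hammingDist_comm]⟩
    · rw [card_eq_zero, filter_eq_empty_iff]
      rintro v - ⟨h1, h2⟩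
      rw [hammingDist_eq_zero] at h1
      subst h1
      rw [hammingDist_comm] at h2
      omega
  have := inter_card_eq x y
  rw [hsplit, card_union_of_disjoint hdisj, h0] at this
  unfold gI at this
  unfold hI
  rcases hd : hammingDist x y with _ | _ | _ | d <;> rw [hd] at this <;> simp_all <;> omega

lemma sum_ind {α : Type*} (C : Multiset α) (p : α → Prop) [DecidablePred p] :
    (C.map (fun c => if p c then (1:ℕ) else 0)).sum = Multiset.card (C.filter p) := by
  induction C using Multiset.induction_on with
  | empty => simp
  | cons a s ih =>
    rw [Multiset.map_cons, Multiset.sum_cons, Multiset.filter_cons, ih]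
    split_ifs with h <;> simp <;> omega

lemma swap_sum {α β : Type*} (S : Finset β) (C : Multiset α) (f : β → α → ℕ) :
    ∑ v ∈ S, (C.map (f v)).sum = (C.map (fun c => ∑ v ∈ S, f v c)).sum := by
  induction C using Multiset.induction_on with
  | empty => simp
  | cons a s ih => simp [Multiset.map_cons, Multiset.sum_cons, Finset.sum_add_distrib, ih]

lemma ball_sum (x : Fin n → Fin q) (C : Multiset (Fin n → Fin q)) :
    ∑ v ∈ univ.filter (fun v => hammingDist x v ≤ 1),
        Multiset.card (C.filter (fun c => hammingDist v c ≤ 1))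
      = (C.map (fun c => gI n q (hammingDist x c))).sum := by
  have h1 : ∀ v : Fin n → Fin q, Multiset.card (C.filter (fun c => hammingDist v c ≤ 1))
      = (C.map (fun c => if hammingDist v c ≤ 1 then (1:ℕ) else 0)).sum :=
    fun v => (sum_ind C _).symm
  simp only [h1]
  rw [swap_sum]
  congr 1
  apply Multiset.map_congr rfl
  intro c _
  rw [Finset.sum_boole]
  rw [Finset.filter_filter]
  rw [show (Nat.cast : ℕ → ℕ) = id from rfl]
  simp only [id]
  rw [filter_congr (fun v _ => by rw [hammingDist_comm v c] :
    ∀ v ∈ (univ : Finset (Fin n → Fin q)),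
      (hammingDist x v ≤ 1 ∧ hammingDist v c ≤ 1) ↔ (hammingDist x v ≤ 1 ∧ hammingDist c v ≤ 1))]
  exact inter_card_eq x c

lemma sphere_sum (hq : 2 < q) (x : Fin n → Fin q) (C : Multiset (Fin n → Fin q)) :
    ∑ v ∈ univ.filter (fun v => hammingDist x v = 1),
        Multiset.card (C.filter (fun c => hammingDist v c ≤ 1))
      = (C.map (fun c => hI n q (hammingDist x c))).sum := by
  have h1 : ∀ v : Fin n → Fin q, Multiset.card (C.filter (fun c => hammingDist v c ≤ 1))
      = (C.map (fun c => if hammingDist v c ≤ 1 then (1:ℕ) else 0)).sum :=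
    fun v => (sum_ind C _).symm
  simp only [h1]
  rw [swap_sum]
  congr 1
  apply Multiset.map_congr rfl
  intro c _
  rw [Finset.sum_boole]
  rw [Finset.filter_filter]
  rw [show (Nat.cast : ℕ → ℕ) = id from rfl]
  simp only [id]
  rw [filter_congr (fun v _ => by rw [hammingDist_comm v c] :
    ∀ v ∈ (univ : Finset (Fin n → Fin q)),
      (hammingDist x v = 1 ∧ hammingDist v c ≤ 1) ↔ (hammingDist x v = 1 ∧ hammingDist c v ≤ 1))]
  exact sphere_inter_card_eq hq x c

end sums

section claim
variable {n q lam : ℕ}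

lemma dist_zero_filter (x : Fin n → Fin q) :
    (univ.filter fun v => hammingDist x v = 0) = {x} := by
  ext v; simp [hammingDist_eq_zero, eq_comm]

lemma card_split (x : Fin n → Fin q) (C : Multiset (Fin n → Fin q)) :
    Multiset.card (C.filter fun c => hammingDist x c ≤ 1)
      = Multiset.card (C.filter fun c => hammingDist x c = 0)
        + Multiset.card (C.filter fun c => hammingDist x c = 1) := by
  have h := Multiset.filter_add_filter (fun c => hammingDist x c = 0)
    (fun c => hammingDist x c = 1) C
  have h2 : C.filter (fun c => hammingDist x c = 0 ∧ hammingDist x c = 1) = 0 := by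
    rw [Multiset.filter_eq_nil]; intro a _; omega
  have h3 : C.filter (fun c => hammingDist x c = 0 ∨ hammingDist x c = 1)
      = C.filter (fun c => hammingDist x c ≤ 1) := by
    apply Multiset.filter_congr; intro a _; omega
  rw [h2, h3, add_zero] at h
  rw [← h, Multiset.card_add]

lemma hI_mod_two (hq : 2 < q) (hqe : Even q) (hne : Even n) (d : ℕ) :
    hI n q d % 2 = (if d = 1 then 1 else 0) % 2 := by
  unfold hI
  have h1 : n * (q - 1) % 2 = 0 := Nat.even_iff.mp (hne.mul_right _)
  have h2 : (q - 1) % 2 = 1 := by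
    obtain ⟨k, rfl⟩ := hqe; omega
  split_ifs <;> omega

lemma per_codeword (hq : 2 < q) (hqe : Even q) (hne : Even n) (hlame : Even lam)
    (C : Multiset (Fin n → Fin q))
    (hpack : ∀ v : Fin n → Fin q,
      Multiset.card (C.filter (fun c => hammingDist v c ≤ 1)) ≤ lam)
    (x : Fin n → Fin q) (hx : x ∈ C) :
    q + (C.map (fun c => gI n q (hammingDist x c))).sum
        + (q - 2) * Multiset.card (C.filter fun c => hammingDist x c = 1)
      ≤ Multiset.card (C.filter fun c => hammingDist x c = 0)
        + lam * (1 + n * (q - 1)) + (q - 2) * lam := by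
  set f : (Fin n → Fin q) → ℕ :=
    fun v => Multiset.card (C.filter (fun c => hammingDist v c ≤ 1)) with hf
  set n0 := Multiset.card (C.filter fun c => hammingDist x c = 0) with hn0d
  set n1 := Multiset.card (C.filter fun c => hammingDist x c = 1) with hn1d
  -- F : sum of f over ball
  have hFsum : (C.map (fun c => gI n q (hammingDist x c))).sum
      = ∑ v ∈ univ.filter (fun v => hammingDist x v ≤ 1), f v := (ball_sum x C).symm
  set F := ∑ v ∈ univ.filter (fun v => hammingDist x v ≤ 1), f v with hFd
  set S := ∑ v ∈ univ.filter (fun v => hammingDist x v = 1), f v with hSd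
  -- ball = {x} ∪ sphere
  have hball : (univ.filter fun v : Fin n → Fin q => hammingDist x v ≤ 1)
      = (univ.filter fun v => hammingDist x v = 0) ∪ (univ.filter fun v => hammingDist x v = 1) := by
    ext v; simp only [mem_filter, mem_univ, true_and, mem_union]; omega
  have hFsplit : F = f x + S := by
    rw [hFd, hball, Finset.sum_union, dist_zero_filter, Finset.sum_singleton]
    simp only [disjoint_left, mem_filter, mem_univ, true_and]; omega
  -- basic facts
  have hn0 : 1 ≤ n0 := by
    rw [hn0d]
    have hmem : x ∈ C.filter (fun c => hammingDist x c = 0) :=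
      Multiset.mem_filter.mpr ⟨hx, hammingDist_self x⟩
    have := Multiset.card_pos_iff_exists_mem.mpr ⟨x, hmem⟩
    omega
  have hfx : f x = n0 + n1 := card_split x C
  have hfxlam : n0 + n1 ≤ lam := by rw [← hfx]; exact hpack x
  have hFle : F ≤ (1 + n * (q - 1)) * lam := by
    rw [hFd]
    calc ∑ v ∈ univ.filter (fun v => hammingDist x v ≤ 1), f v
        ≤ (univ.filter (fun v : Fin n → Fin q => hammingDist x v ≤ 1)).card • lam :=
          Finset.sum_le_card_nsmul _ _ _ (fun v _ => hpack v)
      _ = (1 + n * (q - 1)) * lam := by rw [ball_card]; simp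
  obtain ⟨r, hr⟩ : ∃ r, q = r + 2 := ⟨q - 2, by omega⟩
  have hq2 : q - 2 = r := by omega
  rw [hq2]
  rcases Nat.lt_or_ge n0 2 with hn0two | hn0two
  · -- n0 = 1
    have hn0one : n0 = 1 := by omega
    rcases Nat.lt_or_ge (n1 + 1) lam with hsub | hsub
    · -- n1 + 2 ≤ lam
      have hmul : r * (n1 + 2) ≤ r * lam := Nat.mul_le_mul_left r (by omega)
      have hexp : r * (n1 + 2) = r * n1 + r * 2 := mul_add r n1 2
      rw [hFsum]
      have hlin : q + r * n1 ≤ n0 + r * lam := by omega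
      calc q + F + r * n1 ≤ q + (1 + n * (q-1)) * lam + r * n1 := by omega
        _ ≤ n0 + lam * (1 + n * (q-1)) + r * lam := by rw [mul_comm lam]; omega
    · -- tight case : n1 = lam - 1, parity argument
      have hn1lam : lam = n1 + 1 := by omega
      have hn1odd : n1 % 2 = 1 := by
        obtain ⟨k, hk⟩ := hlame; omega
      -- S ≡ n1 mod 2
      have hSpar : S % 2 = 1 := by
        have h1 : S = (C.map (fun c => hI n q (hammingDist x c))).sum := by
          rw [hSd]; exact sphere_sum hq x C
        have h2 := Multiset.sum_nat_mod (C.map (fun c => hI n q (hammingDist x c))) 2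
        rw [Multiset.map_map] at h2
        have h3 : (C.map fun c => hI n q (hammingDist x c) % 2)
            = C.map fun c => (if hammingDist x c = 1 then 1 else 0) % 2 := by
          apply Multiset.map_congr rfl
          intro c _
          exact hI_mod_two hq hqe hne _
        have h4 := Multiset.sum_nat_mod (C.map (fun c => if hammingDist x c = 1 then 1 else 0)) 2
        rw [Multiset.map_map] at h4
        have h5 : (C.map (fun c => if hammingDist x c = 1 then 1 else 0)).sum = n1 := by
          rw [hn1d]; exact sum_ind C _
        simp only [Function.comp] at h2 h4
        rw [h1, h2, h3, ← h4, h5]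
        exact hn1odd
      -- S ≤ lam * (n*(q-1)), which is even
      have hSle : S ≤ lam * (n * (q - 1)) := by
        rw [hSd]
        calc ∑ v ∈ univ.filter (fun v => hammingDist x v = 1), f v
            ≤ (univ.filter (fun v : Fin n → Fin q => hammingDist x v = 1)).card • lam :=
              Finset.sum_le_card_nsmul _ _ _ (fun v _ => hpack v)
          _ = lam * (n * (q - 1)) := by rw [sphere_card]; simp [mul_comm]
      have hbnd_even : lam * (n * (q - 1)) % 2 = 0 := by
        obtain ⟨k, hk⟩ := hlame
        have : lam * (n * (q-1)) = 2 * (k * (n * (q-1))) := by rw [hk]; ring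
        omega
      have hSlt : S + 1 ≤ lam * (n * (q - 1)) := by omega
      have hfxle : f x ≤ lam := hpack x
      have hexp : r * lam = r * n1 + r := by rw [hn1lam]; ring
      have hexp2 : lam * (1 + n * (q - 1)) = lam + lam * (n * (q - 1)) := by ring
      rw [hFsum]
      omega
  · -- n0 ≥ 2
    have hmul : r * (n1 + 2) ≤ r * lam := Nat.mul_le_mul_left r (by omega)
    have hexp : r * (n1 + 2) = r * n1 + r * 2 := mul_add r n1 2
    rw [hFsum]
    calc q + F + r * n1 ≤ q + (1 + n * (q-1)) * lam + r * n1 := by omega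
      _ ≤ n0 + lam * (1 + n * (q-1)) + r * lam := by rw [mul_comm lam]; omega

end claim

section main
variable {n q : ℕ}

lemma gI_sum (x : Fin n → Fin q) (C : Multiset (Fin n → Fin q)) :
    (C.map (fun c => gI n q (hammingDist x c))).sum
      = (1 + n * (q - 1)) * Multiset.card (C.filter fun c => hammingDist x c = 0)
        + q * Multiset.card (C.filter fun c => hammingDist x c = 1)
        + 2 * Multiset.card (C.filter fun c => hammingDist x c = 2) := by
  have hpt : ∀ c ∈ C, gI n q (hammingDist x c)
      = (1 + n * (q - 1)) * (if hammingDist x c = 0 then 1 else 0)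
        + q * (if hammingDist x c = 1 then 1 else 0)
        + 2 * (if hammingDist x c = 2 then 1 else 0) := by
    intro c _
    unfold gI
    rcases h : hammingDist x c with _ | _ | _ | d <;> simp
  rw [Multiset.map_congr rfl hpt, Multiset.sum_map_add, Multiset.sum_map_add,
    Multiset.sum_map_mul_left, Multiset.sum_map_mul_left, Multiset.sum_map_mul_left,
    sum_ind, sum_ind, sum_ind]

end main

/-- Lemma: λ-fold 1-packing distance distribution bound (even case). -/
theorem stmt_1 (q n lam : ℕ) (hq : 2 < q)
    (hqe : Even q) (hne : Even n) (hlame : Even lam)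
    (C : Multiset (Fin n → Fin q)) (hC : C ≠ 0)
    (hpack : ∀ v : Fin n → Fin q,
      (C.filter (fun c => hammingDist v c ≤ 1)).card ≤ lam)
    (A : ℕ → ℚ)
    (hA : ∀ i, A i = (Multiset.card C : ℚ)⁻¹ *
      ((C.map (fun x => ((C.filter (fun y => hammingDist x y = i)).card : ℚ))).sum)) :
    (n : ℚ) * (q - 1) * A 0 + 2 * (q - 1) * A 1 + 2 * A 2
      ≤ (n + 1) * (q - 1) * lam - q := by
  set m := Multiset.card C with hmd
  have hm : 0 < m := Multiset.card_pos.mpr hC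
  set N0 := (C.map (fun x => Multiset.card (C.filter fun y => hammingDist x y = 0))).sum with hN0
  set N1 := (C.map (fun x => Multiset.card (C.filter fun y => hammingDist x y = 1))).sum with hN1
  set N2 := (C.map (fun x => Multiset.card (C.filter fun y => hammingDist x y = 2))).sum with hN2
  -- master ℕ inequality
  have key : q * m + ((1 + n * (q-1)) * N0 + q * N1 + 2 * N2) + (q - 2) * N1
      ≤ N0 + (lam * (1 + n * (q-1)) + (q - 2) * lam) * m := by
    have hsum := Multiset.sum_map_le_sum_map
      (fun x => q + (C.map (fun c => gI n q (hammingDist x c))).sum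
        + (q - 2) * Multiset.card (C.filter fun c => hammingDist x c = 1))
      (fun x => Multiset.card (C.filter fun c => hammingDist x c = 0)
        + lam * (1 + n * (q - 1)) + (q - 2) * lam)
      (fun x hx => per_codeword hq hqe hne hlame C hpack x hx)
    rw [Multiset.sum_map_add, Multiset.sum_map_add, Multiset.sum_map_add,
      Multiset.sum_map_add] at hsum
    have hconst : ∀ k : ℕ, (C.map (fun _ => k)).sum = k * m := by
      intro k
      simp [Multiset.map_const', mul_comm, hmd]
    have hgs : (C.map (fun x => (C.map (fun c => gI n q (hammingDist x c))).sum)).sum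
        = (1 + n * (q-1)) * N0 + q * N1 + 2 * N2 := by
      rw [Multiset.map_congr rfl (fun x _ => gI_sum x C), Multiset.sum_map_add,
        Multiset.sum_map_add, Multiset.sum_map_mul_left, Multiset.sum_map_mul_left,
        Multiset.sum_map_mul_left]
    rw [hconst, hconst, hconst, hgs, Multiset.sum_map_mul_left] at hsum
    calc q * m + ((1 + n * (q-1)) * N0 + q * N1 + 2 * N2) + (q - 2) * N1
        ≤ N0 + lam * (1 + n * (q-1)) * m + (q - 2) * lam * m := hsum
      _ = N0 + (lam * (1 + n * (q-1)) + (q - 2) * lam) * m := by ring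
  -- cast sums in hA
  have hcast : ∀ i : ℕ,
      ((C.map (fun x => ((C.filter (fun y => hammingDist x y = i)).card : ℚ))).sum)
        = (((C.map (fun x => Multiset.card (C.filter fun y => hammingDist x y = i))).sum : ℕ) : ℚ) := by
    intro i
    rw [Nat.cast_multiset_sum, Multiset.map_map]
    rfl
  rw [hA 0, hA 1, hA 2, hcast 0, hcast 1, hcast 2, ← hN0, ← hN1, ← hN2]
  obtain ⟨r, rfl⟩ : ∃ r, q = r + 2 := ⟨q - 2, by omega⟩
  have hmQ : (0:ℚ) < (m : ℚ) := by exact_mod_cast hm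
  refine le_of_mul_le_mul_right ?_ hmQ
  push_cast
  have keyQ : ((r:ℚ)+2) * m + ((1 + n * (r+1)) * N0 + ((r:ℚ)+2) * N1 + 2 * N2) + r * N1
      ≤ N0 + (lam * (1 + n * (r+1)) + (r:ℚ) * lam) * m := by
    have h1 : (r + 2) - 1 = r + 1 := by omega
    have h2 : (r + 2) - 2 = r := by omega
    rw [h1, h2] at key
    exact_mod_cast key
  have expand : ((n:ℚ) * (((r:ℚ)+2) - 1) * ((m:ℚ)⁻¹ * N0) + 2 * (((r:ℚ)+2) - 1) * ((m:ℚ)⁻¹ * N1)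
        + 2 * ((m:ℚ)⁻¹ * N2)) * m
      = (n:ℚ) * ((r:ℚ)+1) * N0 + 2 * ((r:ℚ)+1) * N1 + 2 * N2 := by
    field_simp
    ring
  have hgoal : ((n:ℚ) * ((r:ℚ)+1)) * N0 + (2 * ((r:ℚ)+1)) * N1 + 2 * (N2:ℚ)
      ≤ (((n:ℚ) + 1) * (((r:ℚ)+2) - 1) * lam - ((r:ℚ)+2)) * m := by
    nlinarith [keyQ]
  calc ((n:ℚ) * ((((r:ℚ)+2)) - 1) * ((m:ℚ)⁻¹ * N0) + 2 * ((((r:ℚ)+2)) - 1) * ((m:ℚ)⁻¹ * N1)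
        + 2 * ((m:ℚ)⁻¹ * N2)) * m
      = (n:ℚ) * ((r:ℚ)+1) * N0 + 2 * ((r:ℚ)+1) * N1 + 2 * N2 := expand
    _ ≤ (((n:ℚ) + 1) * (((r:ℚ)+2) - 1) * lam - ((r:ℚ)+2)) * m := by nlinarith [keyQ]
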